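/- arXiv:0812.3496 — 2 statements merged into one kernel-verified Lean document; each statement's English description precedes it below -/
import Mathlib

section
/- For all matrices A ∈ M_{m,n}(R_max), B ∈ M_{n,k}(R_max), the determinantal rank of the max-plus matrix product satisfies rk_det(AB) ≤ min(rk_det(A), rk_det(B)), where rk_det(M) is the largest size of a square submatrix M' with |M'|⁺ ≠ |M'|⁻. -/
open scoped Classical

noncomputable section

/-- Positive determinant over `R_max = (ℝ ∪ {-∞}, max, +)` (modelled by `WithBot ℝ`):
maximum over even permutations `σ` of `Σ_i m_{iσ(i)}`. -/
def detp {k : ℕ} (M : Matrix (Fin k) (Fin k) (WithBot ℝ)) : WithBot ℝ :=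
  (Finset.univ.filter fun σ : Equiv.Perm (Fin k) => Equiv.Perm.sign σ = 1).sup
    fun σ => ∑ i, M i (σ i)

/-- Negative determinant over `R_max`: maximum over odd permutations. -/
def detm {k : ℕ} (M : Matrix (Fin k) (Fin k) (WithBot ℝ)) : WithBot ℝ :=
  (Finset.univ.filter fun σ : Equiv.Perm (Fin k) => Equiv.Perm.sign σ = -1).sup
    fun σ => ∑ i, M i (σ i)

/-- The determinantal rank of `A`: the largest `k` such that `A` has a `k×k`
submatrix `M` with `|M|⁺ ≠ |M|⁻`. -/
def detRank {m n : ℕ} (A : Matrix (Fin m) (Fin n) (WithBot ℝ)) : ℕ :=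
  sSup {k | ∃ (r : Fin k → Fin m) (c : Fin k → Fin n),
    Function.Injective r ∧ Function.Injective c ∧
    detp (fun a b => A (r a) (c b)) ≠ detm (fun a b => A (r a) (c b))}

/-- Max-plus matrix product: `(AB)_{ij} = max_l (a_{il} + b_{lj})`. -/
def mpMul {m k n : ℕ} (A : Matrix (Fin m) (Fin k) (WithBot ℝ))
    (B : Matrix (Fin k) (Fin n) (WithBot ℝ)) : Matrix (Fin m) (Fin n) (WithBot ℝ) :=
  fun i j => Finset.univ.sup fun l => A i l + B l j

/- ### Auxiliary material for the proof -/

/-- Exchange of finite sum and finite sup in `WithBot ℝ`. -/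
lemma wb_sum_sup {k n : ℕ} (g : Fin k → Fin n → WithBot ℝ) :
    ∑ i, Finset.univ.sup (g i) = Finset.univ.sup fun f : Fin k → Fin n => ∑ i, g i (f i) := by
  apply le_antisymm
  · rcases Nat.eq_zero_or_pos n with hn | hn
    · subst hn
      rcases Nat.eq_zero_or_pos k with hk | hk
      · subst hk
        simp
      · have : ∑ i, Finset.univ.sup (g i) = ⊥ := by
          rw [WithBot.sum_eq_bot_iff]
          exact ⟨⟨0, hk⟩, Finset.mem_univ _, by simp⟩
        rw [this]; exact bot_le
    · have hne : (Finset.univ : Finset (Fin n)).Nonempty := by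
        simpa [Finset.univ_nonempty_iff] using Fin.pos_iff_nonempty.mp hn
      have hch : ∀ i : Fin k, ∃ l : Fin n, Finset.univ.sup (g i) = g i l := by
        intro i
        obtain ⟨l, _, hl⟩ := Finset.exists_mem_eq_sup Finset.univ hne (g i)
        exact ⟨l, hl⟩
      choose f hf using hch
      calc ∑ i, Finset.univ.sup (g i) = ∑ i, g i (f i) :=
            Finset.sum_congr rfl fun i _ => hf i
        _ ≤ _ := Finset.le_sup (f := fun f : Fin k → Fin n => ∑ i, g i (f i))
            (Finset.mem_univ f)
  · apply Finset.sup_le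
    intro f _
    exact Finset.sum_le_sum fun i _ => Finset.le_sup (Finset.mem_univ (f i))

/-- If `v` is below a finite sup, then `v = ⊥` or `v` is below one of the terms. -/
lemma wb_sup_cases {ι : Type*} (s : Finset ι) (F : ι → WithBot ℝ) {v : WithBot ℝ}
    (hv : v ≤ s.sup F) : v = ⊥ ∨ ∃ i ∈ s, v ≤ F i := by
  rcases s.eq_empty_or_nonempty with h | h
  · left
    subst h
    simpa using le_bot_iff.mp (by simpa using hv)
  · obtain ⟨i, hi, he⟩ := Finset.exists_mem_eq_sup s h F
    exact Or.inr ⟨i, hi, he ▸ hv⟩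

/-- The generic term of the Binet–Cauchy expansion of a `k×k` minor of `A ⊗ B`. -/
def auxT {m n p k : ℕ} (A : Matrix (Fin m) (Fin n) (WithBot ℝ))
    (B : Matrix (Fin n) (Fin p) (WithBot ℝ)) (r : Fin k → Fin m) (c : Fin k → Fin p)
    (σ : Equiv.Perm (Fin k)) (f : Fin k → Fin n) : WithBot ℝ :=
  ∑ i, (A (r i) (f i) + B (f i) (c (σ i)))

/-- The sup of expansion terms over permutations of a given sign. -/
def auxD {m n p k : ℕ} (A : Matrix (Fin m) (Fin n) (WithBot ℝ))
    (B : Matrix (Fin n) (Fin p) (WithBot ℝ)) (r : Fin k → Fin m) (c : Fin k → Fin p)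
    (s : ℤˣ) : WithBot ℝ :=
  (Finset.univ.filter fun σ : Equiv.Perm (Fin k) => Equiv.Perm.sign σ = s).sup
    fun σ => Finset.univ.sup (auxT A B r c σ)

lemma auxT_split {m n p k : ℕ} (A : Matrix (Fin m) (Fin n) (WithBot ℝ))
    (B : Matrix (Fin n) (Fin p) (WithBot ℝ)) (r : Fin k → Fin m) (c : Fin k → Fin p)
    (σ : Equiv.Perm (Fin k)) (f : Fin k → Fin n) :
    auxT A B r c σ f = (∑ i, A (r i) (f i)) + ∑ i, B (f i) (c (σ i)) :=
  Finset.sum_add_distrib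

/-- Key step: every expansion term is dominated by the sup of the terms
of the opposite sign, provided every `k×k` minor of `A` (resp. `B`) on the
relevant rows (resp. columns) is sign-balanced. -/
lemma auxT_le {m n p k : ℕ} (A : Matrix (Fin m) (Fin n) (WithBot ℝ))
    (B : Matrix (Fin n) (Fin p) (WithBot ℝ)) (r : Fin k → Fin m) (c : Fin k → Fin p)
    (H : ∀ g : Fin k → Fin n, Function.Injective g →
      detp (fun a b => A (r a) (g b)) = detm (fun a b => A (r a) (g b)) ∨
      detp (fun a b => B (g a) (c b)) = detm (fun a b => B (g a) (c b)))
    (σ : Equiv.Perm (Fin k)) (f : Fin k → Fin n) :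
    auxT A B r c σ f ≤ auxD A B r c (-(Equiv.Perm.sign σ)) := by
  classical
  by_cases hf : Function.Injective f
  · rcases H f hf with hA | hB
    · -- the A-minor on columns `f` is sign-balanced
      have h1 : (∑ i, A (r i) (f i)) ≤ detp (fun a b => A (r a) (f b)) := by
        have h2 : ((1 : Equiv.Perm (Fin k)) ∈
            Finset.univ.filter fun σ : Equiv.Perm (Fin k) => Equiv.Perm.sign σ = 1) := by
          simp
        unfold detp
        exact Finset.le_sup
          (f := fun σ : Equiv.Perm (Fin k) => ∑ i, A (r i) (f (σ i))) h2
      rw [hA] at h1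
      unfold detm at h1
      rcases wb_sup_cases _ _ h1 with hbot | ⟨π₀, hπ₀mem, hle⟩
      · rw [auxT_split, hbot, WithBot.bot_add]
        exact bot_le
      · have hsπ : Equiv.Perm.sign π₀ = -1 := (Finset.mem_filter.mp hπ₀mem).2
        have heq : auxT A B r c (σ * π₀) (f ∘ π₀)
            = (∑ i, A (r i) (f (π₀ i))) + ∑ i, B (f i) (c (σ i)) := by
          rw [auxT_split]
          congr 1
          exact Equiv.sum_comp π₀ (fun j => B (f j) (c (σ j)))
        have hstep : auxT A B r c σ f ≤ auxT A B r c (σ * π₀) (f ∘ π₀) := by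
          rw [auxT_split, heq]
          exact add_le_add hle le_rfl
        unfold auxD
        refine le_trans hstep (le_trans (Finset.le_sup (Finset.mem_univ (f ∘ π₀)))
          (Finset.le_sup (f := fun σ : Equiv.Perm (Fin k) => Finset.univ.sup (auxT A B r c σ)) ?_))
        simp [Finset.mem_filter, Equiv.Perm.sign_mul, hsπ]
    · -- the B-minor on rows `f` is sign-balanced
      have h1 : (∑ i, B (f i) (c (σ i))) ≤
          (Finset.univ.filter fun ρ : Equiv.Perm (Fin k) =>
            Equiv.Perm.sign ρ = -(Equiv.Perm.sign σ)).sup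
          fun ρ => ∑ i, B (f i) (c (ρ i)) := by
        rcases Int.units_eq_one_or (Equiv.Perm.sign σ) with hs | hs
        · have h2 : (∑ i, B (f i) (c (σ i))) ≤ detp (fun a b => B (f a) (c b)) := by
            unfold detp
            exact Finset.le_sup
              (f := fun ρ : Equiv.Perm (Fin k) => ∑ i, B (f i) (c (ρ i))) (by simp [hs])
          rw [hB] at h2
          rw [hs]
          exact h2
        · have h2 : (∑ i, B (f i) (c (σ i))) ≤ detm (fun a b => B (f a) (c b)) := by
            unfold detm
            exact Finset.le_sup
              (f := fun ρ : Equiv.Perm (Fin k) => ∑ i, B (f i) (c (ρ i))) (by simp [hs])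
          rw [← hB] at h2
          rw [hs, neg_neg]
          exact h2
      rcases wb_sup_cases _ _ h1 with hbot | ⟨ρ₀, hρ₀mem, hle⟩
      · rw [auxT_split, hbot, WithBot.add_bot]
        exact bot_le
      · have hsρ : Equiv.Perm.sign ρ₀ = -(Equiv.Perm.sign σ) :=
          (Finset.mem_filter.mp hρ₀mem).2
        have hstep : auxT A B r c σ f ≤ auxT A B r c ρ₀ f := by
          rw [auxT_split, auxT_split]
          exact add_le_add le_rfl hle
        unfold auxD
        refine le_trans hstep (le_trans (Finset.le_sup (Finset.mem_univ f))
          (Finset.le_sup (f := fun σ : Equiv.Perm (Fin k) => Finset.univ.sup (auxT A B r c σ)) ?_))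
        simp [Finset.mem_filter, hsρ]
  · -- `f` not injective: the term also appears with opposite sign
    obtain ⟨i, j, hfij, hij⟩ := Function.not_injective_iff.mp hf
    have hfs : ∀ x, f (Equiv.swap i j x) = f x := by
      intro x
      rcases eq_or_ne x i with rfl | hxi
      · rw [Equiv.swap_apply_left]; exact hfij.symm
      rcases eq_or_ne x j with rfl | hxj
      · rw [Equiv.swap_apply_right]; exact hfij
      · rw [Equiv.swap_apply_of_ne_of_ne hxi hxj]
    have heq : auxT A B r c σ f = auxT A B r c (σ * Equiv.swap i j) f := by
      rw [auxT_split, auxT_split]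
      congr 1
      calc ∑ x, B (f x) (c (σ x))
          = ∑ x, B (f (Equiv.swap i j x))
              (c ((σ * Equiv.swap i j) (Equiv.swap i j x))) := by
            apply Finset.sum_congr rfl
            intro x _
            rw [hfs]
            congr 2
            simp [Equiv.Perm.mul_apply]
        _ = ∑ x, B (f x) (c ((σ * Equiv.swap i j) x)) :=
            Equiv.sum_comp (Equiv.swap i j)
              (fun x => B (f x) (c ((σ * Equiv.swap i j) x)))
    rw [heq]
    unfold auxD
    refine le_trans (Finset.le_sup (Finset.mem_univ f))
      (Finset.le_sup (f := fun σ : Equiv.Perm (Fin k) => Finset.univ.sup (auxT A B r c σ)) ?_)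
    simp [Finset.mem_filter, Equiv.Perm.sign_mul, Equiv.Perm.sign_swap hij]

/-- Key lemma: if every `k×k` minor of `A` on rows `r` (or of `B` on columns `c`)
is sign-balanced, then the corresponding minor of `A ⊗ B` is sign-balanced. -/
lemma key_lemma {m n p k : ℕ} (A : Matrix (Fin m) (Fin n) (WithBot ℝ))
    (B : Matrix (Fin n) (Fin p) (WithBot ℝ)) (r : Fin k → Fin m) (c : Fin k → Fin p)
    (H : ∀ g : Fin k → Fin n, Function.Injective g →
      detp (fun a b => A (r a) (g b)) = detm (fun a b => A (r a) (g b)) ∨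
      detp (fun a b => B (g a) (c b)) = detm (fun a b => B (g a) (c b))) :
    detp (fun a b => mpMul A B (r a) (c b)) = detm (fun a b => mpMul A B (r a) (c b)) := by
  classical
  have hrow : ∀ σ : Equiv.Perm (Fin k),
      (∑ i, mpMul A B (r i) (c (σ i))) = Finset.univ.sup (auxT A B r c σ) := by
    intro σ
    exact wb_sum_sup (fun i l => A (r i) l + B l (c (σ i)))
  have hdp : detp (fun a b => mpMul A B (r a) (c b)) = auxD A B r c 1 := by
    unfold detp auxD
    exact Finset.sup_congr rfl fun σ _ => hrow σ
  have hdm : detm (fun a b => mpMul A B (r a) (c b)) = auxD A B r c (-1) := by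
    unfold detm auxD
    exact Finset.sup_congr rfl fun σ _ => hrow σ
  rw [hdp, hdm]
  apply le_antisymm
  · apply Finset.sup_le
    intro σ hσ
    apply Finset.sup_le
    intro f _
    have h := auxT_le A B r c H σ f
    rw [(Finset.mem_filter.mp hσ).2] at h
    exact h
  · apply Finset.sup_le
    intro σ hσ
    apply Finset.sup_le
    intro f _
    have h := auxT_le A B r c H σ f
    rw [(Finset.mem_filter.mp hσ).2, neg_neg] at h
    exact h

/-- Rank-product inequality for the determinantal rank:
`rk_det(AB) ≤ min(rk_det(A), rk_det(B))`. -/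
theorem detRank_mul_le {m n k : ℕ} (A : Matrix (Fin m) (Fin n) (WithBot ℝ))
    (B : Matrix (Fin n) (Fin k) (WithBot ℝ)) :
    detRank (mpMul A B) ≤ min (detRank A) (detRank B) := by
  refine le_min ?_ ?_
  · refine csSup_le' ?_
    rintro k' ⟨r, c, hr, hc, hne⟩
    refine le_csSup ⟨m, ?_⟩ ?_
    · rintro x ⟨r', c', hr', hc', h⟩
      simpa using Fintype.card_le_of_injective r' hr'
    · by_contra hno
      apply hne
      apply key_lemma A B r c
      intro g hg
      left
      by_contra hgne
      exact hno ⟨r, g, hr, hg, hgne⟩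
  · refine csSup_le' ?_
    rintro k' ⟨r, c, hr, hc, hne⟩
    refine le_csSup ⟨n, ?_⟩ ?_
    · rintro x ⟨r', c', hr', hc', h⟩
      simpa using Fintype.card_le_of_injective r' hr'
    · by_contra hno
      apply hne
      apply key_lemma A B r c
      intro g hg
      right
      by_contra hgne
      exact hno ⟨g, c, hg, hc, hgne⟩
end
end

section
/- For an n×n matrix A over R_max with n ≥ 2 and mr_GM(A) = 2 (i.e., some two rows are Gondran–Minoux independent but any three rows are Gondran–Minoux dependent), the tropical rank, determinantal rank, maximal row and column Gondran–Minoux ranks, factor rank, and row rank of A are all equal to 2. -/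
open scoped Classical

noncomputable section

/-- A square max-plus matrix is tropically nonsingular if the maximum in its
permanent is finite and attained by exactly one permutation. -/
def TropNonsing {k : ℕ} (M : Matrix (Fin k) (Fin k) (WithBot ℝ)) : Prop :=
  ∃ σ : Equiv.Perm (Fin k), (∑ i, M i (σ i)) ≠ ⊥ ∧
    ∀ τ : Equiv.Perm (Fin k), τ ≠ σ → (∑ i, M i (τ i)) < ∑ i, M i (σ i)

/-- Tropical rank: largest size of a tropically nonsingular square submatrix. -/
def tropRank {m n : ℕ} (A : Matrix (Fin m) (Fin n) (WithBot ℝ)) : ℕ :=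
  sSup {k | ∃ (r : Fin k → Fin m) (c : Fin k → Fin n),
    Function.Injective r ∧ Function.Injective c ∧
    TropNonsing (fun a b => A (r a) (c b))}

/-- Gondran–Minoux linear dependence of a family of vectors in `R_max^n`. -/
def GMdep {k n : ℕ} (w : Fin k → Fin n → WithBot ℝ) : Prop :=
  ∃ (I : Finset (Fin k)) (α : Fin k → WithBot ℝ),
    (∃ j, α j ≠ ⊥) ∧
    ∀ l : Fin n, (I.sup fun j => α j + w j l) = (Iᶜ.sup fun j => α j + w j l)

/-- Maximal row rank in the Gondran–Minoux sense: maximal number of rows forming a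
Gondran–Minoux independent family. -/
def gmRowRank {m n : ℕ} (A : Matrix (Fin m) (Fin n) (WithBot ℝ)) : ℕ :=
  sSup {k | ∃ r : Fin k → Fin m, Function.Injective r ∧ ¬ GMdep (fun i => A (r i))}

/-- Factor rank: smallest `k` such that `A = BC` with `B` of size `m×k` and `C` of
size `k×n`. -/
def facRank {m n : ℕ} (A : Matrix (Fin m) (Fin n) (WithBot ℝ)) : ℕ :=
  sInf {k | ∃ (B : Matrix (Fin m) (Fin k) (WithBot ℝ))
    (C : Matrix (Fin k) (Fin n) (WithBot ℝ)), A = mpMul B C}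

/-- The max-plus span of a finite family of vectors. -/
def mpSpanFam {k n : ℕ} (g : Fin k → Fin n → WithBot ℝ) : Set (Fin n → WithBot ℝ) :=
  {v | ∃ α : Fin k → WithBot ℝ, v = fun j => Finset.univ.sup fun i => α i + g i j}

/-- The row space of a max-plus matrix. -/
def mpRowSpace {m n : ℕ} (A : Matrix (Fin m) (Fin n) (WithBot ℝ)) :
    Set (Fin n → WithBot ℝ) := mpSpanFam (fun i => A i)

/-- Row rank: the weak dimension of the row space, i.e. the minimal cardinality of a
generating family of the row space (which equals the minimal cardinality of a weakly
independent generating family). -/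
def rowRank {m n : ℕ} (A : Matrix (Fin m) (Fin n) (WithBot ℝ)) : ℕ :=
  sInf {k | ∃ g : Fin k → (Fin n → WithBot ℝ), mpSpanFam g = mpRowSpace A}


section AuxRanks

abbrev V (n : ℕ) := Fin n → WithBot ℝ

lemma supAddR (s : Finset ι) (f : ι → WithBot ℝ) (c : WithBot ℝ) :
    s.sup f + c = s.sup fun i => f i + c := by
  classical
  induction s using Finset.induction_on with
  | empty => simp
  | insert a s h ih => rw [Finset.sup_insert, Finset.sup_insert, ← ih,
      (max_add_add_right _ _ _).symm]

lemma fin1sup (f : Fin 1 → WithBot ℝ) : Finset.univ.sup f = f 0 := by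
  have : (Finset.univ : Finset (Fin 1)) = {0} := by decide
  rw [this, Finset.sup_singleton]

lemma fin2sup (f : Fin 2 → WithBot ℝ) : Finset.univ.sup f = f 0 ⊔ f 1 := by
  have : (Finset.univ : Finset (Fin 2)) = {0, 1} := by decide
  rw [this]; simp [Finset.sup_insert]

lemma fin3sup (f : Fin 3 → WithBot ℝ) : Finset.univ.sup f = f 0 ⊔ f 1 ⊔ f 2 := by
  have : (Finset.univ : Finset (Fin 3)) = {0, 1, 2} := by decide
  rw [this]; simp [Finset.sup_insert, sup_assoc]

lemma supIf {k : ℕ} (I : Finset (Fin k)) (f : Fin k → WithBot ℝ) :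
    I.sup f = Finset.univ.sup fun i => if i ∈ I then f i else ⊥ := by
  apply le_antisymm
  · exact Finset.sup_le fun i hi => by
      simpa [hi] using Finset.le_sup (f := fun i => if i ∈ I then f i else ⊥) (Finset.mem_univ i)
  · exact Finset.sup_le fun i _ => by
      by_cases hi : i ∈ I
      · simpa [hi] using Finset.le_sup (f := f) hi
      · simp [hi]

lemma supIf2 (I : Finset (Fin 2)) (f : Fin 2 → WithBot ℝ) :
    I.sup f = (if 0 ∈ I then f 0 else ⊥) ⊔ (if 1 ∈ I then f 1 else ⊥) := by
  rw [supIf, fin2sup]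

lemma supIf3 (I : Finset (Fin 3)) (f : Fin 3 → WithBot ℝ) :
    I.sup f = (if 0 ∈ I then f 0 else ⊥) ⊔ (if 1 ∈ I then f 1 else ⊥) ⊔ (if 2 ∈ I then f 2 else ⊥) := by
  rw [supIf, fin3sup]

lemma coe_add_cancel {r : ℝ} {x y : WithBot ℝ} (h : (r : WithBot ℝ) + x = (r : WithBot ℝ) + y) : x = y :=
  WithBot.add_left_cancel (by simp) h

lemma eq_neg_add {r : ℝ} {x y : WithBot ℝ} (h : (r : WithBot ℝ) + x = y) :
    x = ((-r : ℝ) : WithBot ℝ) + y := by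
  apply coe_add_cancel (r := r)
  rw [← h, ← add_assoc, ← WithBot.coe_add]
  simp

lemma sum_ne_bot {k : ℕ} {f : Fin k → WithBot ℝ} (h : (∑ i, f i) ≠ ⊥) (i : Fin k) : f i ≠ ⊥ := by
  intro hb
  apply h
  rw [← Finset.add_sum_erase _ _ (Finset.mem_univ i), hb, WithBot.bot_add]

lemma inj2 {α : Type*} {x y : α} (h : x ≠ y) : Function.Injective ![x, y] := by
  intro a b hab
  fin_cases a <;> fin_cases b <;> simp_all

lemma inj3 {α : Type*} {x y z : α} (hxy : x ≠ y) (hxz : x ≠ z) (hyz : y ≠ z) :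
    Function.Injective ![x, y, z] := by
  intro a b hab
  fin_cases a <;> fin_cases b <;> simp_all

/-- membership in tropical span of two vectors, as a predicate -/
def sp2 {n : ℕ} (g h v : V n) : Prop :=
  ∃ c d : WithBot ℝ, ∀ l, v l = (c + g l) ⊔ (d + h l)

lemma sp2_left {n : ℕ} (g h : V n) : sp2 g h g :=
  ⟨0, ⊥, fun l => by simp⟩

lemma sp2_right {n : ℕ} (g h : V n) : sp2 g h h :=
  ⟨⊥, 0, fun l => by simp⟩

lemma sp2_bot {n : ℕ} (g h v : V n) (hv : ∀ l, v l = ⊥) : sp2 g h v :=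
  ⟨⊥, ⊥, fun l => by simp [hv l]⟩

lemma sp2_trans {n : ℕ} {s t x y v : V n} (hx : sp2 s t x) (hy : sp2 s t y)
    (hv : sp2 x y v) : sp2 s t v := by
  obtain ⟨c1, d1, h1⟩ := hx
  obtain ⟨c2, d2, h2⟩ := hy
  obtain ⟨c, d, hc⟩ := hv
  refine ⟨(c + c1) ⊔ (d + c2), (c + d1) ⊔ (d + d2), fun l => ?_⟩
  rw [hc l, h1 l, h2 l, ← max_add_add_right, ← max_add_add_right,
    ← max_add_add_left, ← max_add_add_left]
  rw [add_assoc, add_assoc, add_assoc, add_assoc]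
  exact sup_sup_sup_comm _ _ _ _

section scratch
variable {n : ℕ}

/-- a bottom row makes any pair dependent (bot in first slot) -/
lemma botdep1 {u v : V n} (hu : ∀ l, u l = ⊥) : GMdep ![u, v] := by
  refine ⟨{0}, ![0, ⊥], ⟨0, by simp⟩, fun l => ?_⟩
  rw [supIf2, supIf2]
  simp [hu l]

lemma botdep2 {u v : V n} (hv : ∀ l, v l = ⊥) : GMdep ![u, v] := by
  refine ⟨{1}, ![⊥, 0], ⟨1, by simp⟩, fun l => ?_⟩
  rw [supIf2, supIf2]
  simp [hv l]

/-- two proportional-to-a-common-vector rows are dependent -/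
lemma propdep {u v g : V n} {c d : WithBot ℝ} (hu : ∀ l, u l = c + g l)
    (hv : ∀ l, v l = d + g l) : GMdep ![u, v] := by
  rcases eq_or_ne c ⊥ with hc | hc
  · exact botdep1 (fun l => by simp [hu l, hc])
  rcases eq_or_ne d ⊥ with hd | hd
  · exact botdep2 (fun l => by simp [hv l, hd])
  refine ⟨{0}, ![d, c], ⟨0, hd⟩, fun l => ?_⟩
  rw [supIf2, supIf2]
  simp only [show ((0:Fin 2) ∈ ({0}:Finset (Fin 2))) = True by simp,
    show ((1:Fin 2) ∈ ({0}:Finset (Fin 2))) = False by simp]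
  simp [hu l, hv l]
  rw [← add_assoc, ← add_assoc, add_comm d c]

/-- if x is in the span of y and z (pair dep versions) -/
lemma memdep0 {x y z : V n} (h : sp2 y z x) : GMdep ![x, y, z] := by
  obtain ⟨c, d, hc⟩ := h
  refine ⟨{0}, ![0, c, d], ⟨0, by simp⟩, fun l => ?_⟩
  rw [supIf3, supIf3]
  have h0 : ((0:Fin 3) ∈ ({0}:Finset (Fin 3))) := by simp
  have h1 : ¬((1:Fin 3) ∈ ({0}:Finset (Fin 3))) := by simp
  have h2 : ¬((2:Fin 3) ∈ ({0}:Finset (Fin 3))) := by simp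
  simp [h0, h1, h2, hc l, sup_assoc]

lemma memdep1 {x y z : V n} (h : sp2 x z y) : GMdep ![x, y, z] := by
  obtain ⟨c, d, hc⟩ := h
  refine ⟨{1}, ![c, 0, d], ⟨1, by simp⟩, fun l => ?_⟩
  rw [supIf3, supIf3]
  have h0 : ¬((0:Fin 3) ∈ ({1}:Finset (Fin 3))) := by simp
  have h1 : ((1:Fin 3) ∈ ({1}:Finset (Fin 3))) := by simp
  have h2 : ¬((2:Fin 3) ∈ ({1}:Finset (Fin 3))) := by simp
  simp [h0, h1, h2, hc l]

lemma memdep2 {x y z : V n} (h : sp2 x y z) : GMdep ![x, y, z] := by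
  obtain ⟨c, d, hc⟩ := h
  refine ⟨{2}, ![c, d, 0], ⟨2, by simp⟩, fun l => ?_⟩
  rw [supIf3, supIf3]
  have h0 : ¬((0:Fin 3) ∈ ({2}:Finset (Fin 3))) := by simp
  have h1 : ¬((1:Fin 3) ∈ ({2}:Finset (Fin 3))) := by simp
  have h2 : ((2:Fin 3) ∈ ({2}:Finset (Fin 3))) := by simp
  simp [h0, h1, h2, hc l]

end scratch

section scratch2
variable {n : ℕ}

/-- characterization of dependent pairs of nonbottom vectors: proportionality -/
lemma pairprop {x y : V n} (hd : GMdep ![x, y]) (hx : ∃ l, x l ≠ ⊥) (hy : ∃ l, y l ≠ ⊥) :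
    ∃ c : ℝ, (∀ m, x m = (c : WithBot ℝ) + y m) ∨ (∀ m, y m = (c : WithBot ℝ) + x m) := by
  obtain ⟨I, α, ⟨j, hj⟩, hbal⟩ := hd
  obtain ⟨lx, hlx⟩ := hx
  obtain ⟨ly, hly⟩ := hy
  have hbal' : ∀ l, ((if 0 ∈ I then α 0 + x l else ⊥) ⊔ (if 1 ∈ I then α 1 + y l else ⊥))
      = ((if 0 ∉ I then α 0 + x l else ⊥) ⊔ (if 1 ∉ I then α 1 + y l else ⊥)) := by
    intro l
    have := hbal l
    rw [supIf2, supIf2] at this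
    simpa [Finset.mem_compl] using this
  by_cases h0 : 0 ∈ I <;> by_cases h1 : 1 ∈ I
  · -- I = univ : all terms ⊥
    exfalso
    have hb : ∀ l, (α 0 + x l) ⊔ (α 1 + y l) = ⊥ := by
      intro l; have := hbal' l; simpa [h0, h1] using this
    have ha0 : α 0 = ⊥ := by
      have := sup_eq_bot_iff.1 (hb lx) |>.1
      rcases WithBot.add_eq_bot.1 this with h | h
      · exact h
      · exact absurd h hlx
    have ha1 : α 1 = ⊥ := by
      have := sup_eq_bot_iff.1 (hb ly) |>.2
      rcases WithBot.add_eq_bot.1 this with h | h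
      · exact h
      · exact absurd h hly
    fin_cases j <;> simp_all
  · -- I = {0}: α0 + x = α1 + y
    have heq : ∀ l, α 0 + x l = α 1 + y l := by
      intro l; have := hbal' l; simpa [h0, h1] using this
    have ha0 : α 0 ≠ ⊥ := by
      intro hb
      have ha1 : α 1 = ⊥ := by
        have := (heq ly).symm
        rw [hb, WithBot.bot_add] at this
        rcases WithBot.add_eq_bot.1 this with h | h
        · exact h
        · exact absurd h hly
      fin_cases j <;> simp_all
    have ha1 : α 1 ≠ ⊥ := by
      intro hb
      have ha0' : α 0 = ⊥ := by
        have := heq lx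
        rw [hb, WithBot.bot_add] at this
        rcases WithBot.add_eq_bot.1 this with h | h
        · exact h
        · exact absurd h hlx
      exact ha0 ha0'
    obtain ⟨a0, ha0e⟩ := WithBot.ne_bot_iff_exists.1 ha0
    obtain ⟨a1, ha1e⟩ := WithBot.ne_bot_iff_exists.1 ha1
    refine ⟨-a0 + a1, Or.inl fun m => ?_⟩
    have h2 := heq m
    rw [← ha0e, ← ha1e] at h2
    have := eq_neg_add h2
    rw [this, ← add_assoc, ← WithBot.coe_add]
  · -- I = {1}: α1 + y = α0 + x, symmetric
    have heq : ∀ l, α 1 + y l = α 0 + x l := by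
      intro l; have := hbal' l; simpa [h0, h1] using this
    have ha1 : α 1 ≠ ⊥ := by
      intro hb
      have ha0 : α 0 = ⊥ := by
        have := (heq lx).symm
        rw [hb, WithBot.bot_add] at this
        rcases WithBot.add_eq_bot.1 this with h | h
        · exact h
        · exact absurd h hlx
      fin_cases j <;> simp_all
    have ha0 : α 0 ≠ ⊥ := by
      intro hb
      have ha1' : α 1 = ⊥ := by
        have := heq ly
        rw [hb, WithBot.bot_add] at this
        rcases WithBot.add_eq_bot.1 this with h | h
        · exact h
        · exact absurd h hly
      exact ha1 ha1'
    obtain ⟨a0, ha0e⟩ := WithBot.ne_bot_iff_exists.1 ha0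
    obtain ⟨a1, ha1e⟩ := WithBot.ne_bot_iff_exists.1 ha1
    refine ⟨-a1 + a0, Or.inr fun m => ?_⟩
    have h2 := heq m
    rw [← ha0e, ← ha1e] at h2
    have := eq_neg_add h2
    rw [this, ← add_assoc, ← WithBot.coe_add]
  · -- I = ∅
    exfalso
    have hb : ∀ l, (α 0 + x l) ⊔ (α 1 + y l) = ⊥ := by
      intro l; have := (hbal' l).symm; simpa [h0, h1] using this
    have ha0 : α 0 = ⊥ := by
      have := sup_eq_bot_iff.1 (hb lx) |>.1
      rcases WithBot.add_eq_bot.1 this with h | h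
      · exact h
      · exact absurd h hlx
    have ha1 : α 1 = ⊥ := by
      have := sup_eq_bot_iff.1 (hb ly) |>.2
      rcases WithBot.add_eq_bot.1 this with h | h
      · exact h
      · exact absurd h hly
    fin_cases j <;> simp_all

end scratch2

section scratch3
variable {n : ℕ}

lemma one {x y z : V n} {a b c : WithBot ℝ} (hy : ∃ l, y l ≠ ⊥) (hz : ∃ l, z l ≠ ⊥)
    (hne : ¬(a = ⊥ ∧ b = ⊥ ∧ c = ⊥)) (heq : ∀ l, a + x l = (b + y l) ⊔ (c + z l)) :
    sp2 y z x := by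
  obtain ⟨ly, hly⟩ := hy
  obtain ⟨lz, hlz⟩ := hz
  rcases eq_or_ne a ⊥ with ha | ha
  · exfalso
    have hb : ∀ l, (b + y l) ⊔ (c + z l) = ⊥ := fun l => by
      rw [← heq l, ha, WithBot.bot_add]
    have hbb : b = ⊥ := by
      have := sup_eq_bot_iff.1 (hb ly) |>.1
      rcases WithBot.add_eq_bot.1 this with h | h
      · exact h
      · exact absurd h hly
    have hcc : c = ⊥ := by
      have := sup_eq_bot_iff.1 (hb lz) |>.2
      rcases WithBot.add_eq_bot.1 this with h | h
      · exact h
      · exact absurd h hlz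
    exact hne ⟨ha, hbb, hcc⟩
  · obtain ⟨r, hre⟩ := WithBot.ne_bot_iff_exists.1 ha
    refine ⟨((-r : ℝ) : WithBot ℝ) + b, ((-r : ℝ) : WithBot ℝ) + c, fun l => ?_⟩
    have h2 := heq l
    rw [← hre] at h2
    rw [eq_neg_add h2, ← max_add_add_left, ← add_assoc, ← add_assoc]

lemma D3 {u v w : V n} (hu : ∃ l, u l ≠ ⊥) (hv : ∃ l, v l ≠ ⊥) (hw : ∃ l, w l ≠ ⊥)
    (hd : GMdep ![u, v, w]) :
    sp2 v w u ∨ sp2 u w v ∨ sp2 u v w := by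
  obtain ⟨I, α, ⟨j, hj⟩, hbal⟩ := hd
  have hbal' : ∀ l, ((if 0 ∈ I then α 0 + u l else ⊥) ⊔ (if 1 ∈ I then α 1 + v l else ⊥)
        ⊔ (if 2 ∈ I then α 2 + w l else ⊥))
      = ((if 0 ∉ I then α 0 + u l else ⊥) ⊔ (if 1 ∉ I then α 1 + v l else ⊥)
        ⊔ (if 2 ∉ I then α 2 + w l else ⊥)) := by
    intro l
    have := hbal l
    rw [supIf3, supIf3] at this
    simpa [Finset.mem_compl] using this
  have hjne : ¬(α 0 = ⊥ ∧ α 1 = ⊥ ∧ α 2 = ⊥) := by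
    rintro ⟨h0, h1, h2⟩; fin_cases j <;> simp_all
  by_cases h0 : 0 ∈ I <;> by_cases h1 : 1 ∈ I <;> by_cases h2 : 2 ∈ I
  · -- I = univ
    exfalso
    have hb : ∀ l, (α 0 + u l) ⊔ (α 1 + v l) ⊔ (α 2 + w l) = ⊥ := by
      intro l; have := hbal' l; simpa [h0, h1, h2] using this
    apply hjne
    obtain ⟨lu, hlu⟩ := hu; obtain ⟨lv, hlv⟩ := hv; obtain ⟨lw, hlw⟩ := hw
    refine ⟨?_, ?_, ?_⟩
    · have := sup_eq_bot_iff.1 (sup_eq_bot_iff.1 (hb lu)).1 |>.1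
      rcases WithBot.add_eq_bot.1 this with h | h
      · exact h
      · exact absurd h hlu
    · have := sup_eq_bot_iff.1 (sup_eq_bot_iff.1 (hb lv)).1 |>.2
      rcases WithBot.add_eq_bot.1 this with h | h
      · exact h
      · exact absurd h hlv
    · have := sup_eq_bot_iff.1 (hb lw) |>.2
      rcases WithBot.add_eq_bot.1 this with h | h
      · exact h
      · exact absurd h hlw
  · -- I = {0,1}: (α0+u) ⊔ (α1+v) = α2 + w
    refine Or.inr (Or.inr (one (a := α 2) (b := α 0) (c := α 1) hu hv (by tauto) fun l => ?_))
    have := (hbal' l).symm; simpa [h0, h1, h2] using this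
  · -- I = {0,2}: (α0+u) ⊔ (α2+w) = α1 + v
    refine Or.inr (Or.inl (one (a := α 1) (b := α 0) (c := α 2) hu hw (by tauto) fun l => ?_))
    have := (hbal' l).symm
    simpa [h0, h1, h2] using this
  · -- I = {0}: α0 + u = (α1+v) ⊔ (α2+w)
    refine Or.inl (one (a := α 0) (b := α 1) (c := α 2) hv hw (by tauto) fun l => ?_)
    have := hbal' l; simpa [h0, h1, h2] using this
  · -- I = {1,2}: (α1+v) ⊔ (α2+w) = α0 + u
    refine Or.inl (one (a := α 0) (b := α 1) (c := α 2) hv hw (by tauto) fun l => ?_)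
    have := (hbal' l).symm; simpa [h0, h1, h2] using this
  · -- I = {1}: α1 + v = (α0+u) ⊔ (α2+w)
    refine Or.inr (Or.inl (one (a := α 1) (b := α 0) (c := α 2) hu hw (by tauto) fun l => ?_))
    have := hbal' l
    simpa [h0, h1, h2] using this
  · -- I = {2}: α2 + w = (α0+u) ⊔ (α1+v)
    refine Or.inr (Or.inr (one (a := α 2) (b := α 0) (c := α 1) hu hv (by tauto) fun l => ?_))
    have := hbal' l; simpa [h0, h1, h2] using this
  · -- I = ∅
    exfalso
    have hb : ∀ l, (α 0 + u l) ⊔ (α 1 + v l) ⊔ (α 2 + w l) = ⊥ := by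
      intro l; have := (hbal' l).symm; simpa [h0, h1, h2] using this
    apply hjne
    obtain ⟨lu, hlu⟩ := hu; obtain ⟨lv, hlv⟩ := hv; obtain ⟨lw, hlw⟩ := hw
    refine ⟨?_, ?_, ?_⟩
    · have := sup_eq_bot_iff.1 (sup_eq_bot_iff.1 (hb lu)).1 |>.1
      rcases WithBot.add_eq_bot.1 this with h | h
      · exact h
      · exact absurd h hlu
    · have := sup_eq_bot_iff.1 (sup_eq_bot_iff.1 (hb lv)).1 |>.2
      rcases WithBot.add_eq_bot.1 this with h | h
      · exact h
      · exact absurd h hlv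
    · have := sup_eq_bot_iff.1 (hb lw) |>.2
      rcases WithBot.add_eq_bot.1 this with h | h
      · exact h
      · exact absurd h hlw

end scratch3

section scratch4
variable {n : ℕ}


lemma main (A : Matrix (Fin n) (Fin n) (WithBot ℝ))
    (Hdep : ∀ r : Fin 3 → Fin n, Function.Injective r → GMdep fun t => A (r t))
    {i0 j0 : Fin n} (hij : i0 ≠ j0) (hi0 : ∃ l, A i0 l ≠ ⊥) (hj0 : ∃ l, A j0 l ≠ ⊥) :
    ∃ p q : Fin n, p ≠ q ∧ ∀ i, sp2 (A p) (A q) (A i) := by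
  have key : ∀ s : Finset (Fin n), ∃ p q : Fin n, p ≠ q ∧ (∃ l, A p l ≠ ⊥) ∧
      (∃ l, A q l ≠ ⊥) ∧ ∀ i ∈ s, sp2 (A p) (A q) (A i) := by
    intro s
    induction s using Finset.induction_on with
    | empty => exact ⟨i0, j0, hij, hi0, hj0, fun i hi => absurd hi (Finset.notMem_empty i)⟩
    | insert a s ha ih =>
      obtain ⟨p, q, hpq, hp, hq, hcov⟩ := ih
      by_cases hap : a = p
      · exact ⟨p, q, hpq, hp, hq, fun i hi => by
          rcases Finset.mem_insert.1 hi with rfl | hi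
          · exact hap ▸ sp2_left _ _
          · exact hcov i hi⟩
      by_cases haq : a = q
      · exact ⟨p, q, hpq, hp, hq, fun i hi => by
          rcases Finset.mem_insert.1 hi with rfl | hi
          · exact haq ▸ sp2_right _ _
          · exact hcov i hi⟩
      by_cases hab : ∀ l, A a l = ⊥
      · exact ⟨p, q, hpq, hp, hq, fun i hi => by
          rcases Finset.mem_insert.1 hi with rfl | hi
          · exact sp2_bot _ _ _ hab
          · exact hcov i hi⟩
      push_neg at hab
      have hdep : GMdep ![A p, A q, A a] := by
        have := Hdep ![p, q, a] (inj3 hpq (Ne.symm hap) (Ne.symm haq))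
        have he : (fun t => A (![p, q, a] t)) = ![A p, A q, A a] := by
          funext t
          fin_cases t <;> simp
        rwa [he] at this
      rcases D3 hp hq hab hdep with hc | hc | hc
      · -- A p ∈ sp2 (A q) (A a) : new pair (q, a)
        refine ⟨q, a, fun he => haq he.symm, hq, hab, fun i hi => ?_⟩
        rcases Finset.mem_insert.1 hi with rfl | hi
        · exact sp2_right _ _
        · exact sp2_trans hc (sp2_left _ _) (by
            obtain ⟨c, d, hcd⟩ := hcov i hi
            exact ⟨c, d, fun l => by rw [hcd l, sup_comm]⟩)
      · -- A q ∈ sp2 (A p) (A a) : new pair (p, a)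
        refine ⟨p, a, fun he => hap he.symm, hp, hab, fun i hi => ?_⟩
        rcases Finset.mem_insert.1 hi with rfl | hi
        · exact sp2_right _ _
        · exact sp2_trans (sp2_left _ _) hc (hcov i hi)
      · -- A a ∈ sp2 (A p) (A q) : keep
        exact ⟨p, q, hpq, hp, hq, fun i hi => by
          rcases Finset.mem_insert.1 hi with rfl | hi
          · exact hc
          · exact hcov i hi⟩
  obtain ⟨p, q, hpq, _, _, hcov⟩ := key Finset.univ
  exact ⟨p, q, hpq, fun i => hcov i (Finset.mem_univ i)⟩

end scratch4

section opp
variable {k : ℕ}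

/-- core exchange: two rows attaining the same branch give an opposite-parity
permutation with at least the same weight -/
lemma core (M : Matrix (Fin k) (Fin k) (WithBot ℝ)) (τ : Equiv.Perm (Fin k))
    (x Y : Fin k → WithBot ℝ) (hbound : ∀ j c, x j + Y c ≤ M j c)
    {i i' : Fin k} (hne : i ≠ i')
    (hi : M i (τ i) = x i + Y (τ i)) (hi' : M i' (τ i') = x i' + Y (τ i')) :
    ∃ τ' : Equiv.Perm (Fin k), Equiv.Perm.sign τ' = - Equiv.Perm.sign τ ∧
      (∑ j, M j (τ j)) ≤ ∑ j, M j (τ' j) := by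
  refine ⟨τ * Equiv.swap i i', ?_, ?_⟩
  · rw [Equiv.Perm.sign_mul, Equiv.Perm.sign_swap hne, mul_neg_one]
  · have hsplit : ∀ f : Fin k → WithBot ℝ,
        ∑ j, f j = f i + (f i' + ∑ j ∈ (Finset.univ.erase i).erase i', f j) := by
      intro f
      rw [← Finset.add_sum_erase _ f (Finset.mem_univ i),
        ← Finset.add_sum_erase _ f (Finset.mem_erase.2 ⟨Ne.symm hne, Finset.mem_univ i'⟩)]
    rw [hsplit (fun j => M j (τ j)), hsplit (fun j => M j ((τ * Equiv.swap i i') j))]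
    have e1 : (τ * Equiv.swap i i') i = τ i' := by simp [Equiv.Perm.mul_apply]
    have e2 : (τ * Equiv.swap i i') i' = τ i := by simp [Equiv.Perm.mul_apply]
    have e3 : ∑ j ∈ (Finset.univ.erase i).erase i', M j ((τ * Equiv.swap i i') j)
        = ∑ j ∈ (Finset.univ.erase i).erase i', M j (τ j) := by
      apply Finset.sum_congr rfl
      intro j hj
      have hj' := Finset.mem_erase.1 hj
      have hj'' := Finset.mem_erase.1 hj'.2
      rw [Equiv.Perm.mul_apply, Equiv.swap_apply_of_ne_of_ne hj''.1 hj'.1]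
    rw [e1, e2, e3, hi, hi']
    calc x i + Y (τ i) + (x i' + Y (τ i') + ∑ j ∈ (Finset.univ.erase i).erase i', M j (τ j))
        = x i + Y (τ i') + (x i' + Y (τ i) + ∑ j ∈ (Finset.univ.erase i).erase i', M j (τ j)) := by
          abel
      _ ≤ M i (τ i') + (M i' (τ i) + ∑ j ∈ (Finset.univ.erase i).erase i', M j (τ j)) := by
          exact add_le_add (hbound i (τ i')) (add_le_add (hbound i' (τ i)) le_rfl)

lemma opp (hk : 3 ≤ k) (a b G H : Fin k → WithBot ℝ)
    (M : Matrix (Fin k) (Fin k) (WithBot ℝ))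
    (hM : ∀ i j, M i j = (a i + G j) ⊔ (b i + H j))
    (τ : Equiv.Perm (Fin k)) (hτ : (∑ i, M i (τ i)) ≠ ⊥) :
    ∃ τ' : Equiv.Perm (Fin k), Equiv.Perm.sign τ' = - Equiv.Perm.sign τ ∧
      (∑ i, M i (τ i)) ≤ ∑ i, M i (τ' i) := by
  have hbr : ∀ i, M i (τ i) = a i + G (τ i) ∨ M i (τ i) = b i + H (τ i) := by
    intro i
    rcases le_total (a i + G (τ i)) (b i + H (τ i)) with hle | hle
    · right; rw [hM i (τ i), sup_eq_right.2 hle]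
    · left; rw [hM i (τ i), sup_eq_left.2 hle]
  have hba : ∀ j c, a j + G c ≤ M j c := fun j c => (hM j c).symm ▸ le_sup_left
  have hbb : ∀ j c, b j + H c ≤ M j c := fun j c => (hM j c).symm ▸ le_sup_right
  set i0 : Fin k := ⟨0, by omega⟩
  set i1 : Fin k := ⟨1, by omega⟩
  set i2 : Fin k := ⟨2, by omega⟩
  have h01 : i0 ≠ i1 := by simp [i0, i1, Fin.ext_iff]
  have h02 : i0 ≠ i2 := by simp [i0, i2, Fin.ext_iff]
  have h12 : i1 ≠ i2 := by simp [i1, i2, Fin.ext_iff]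
  by_cases p0 : M i0 (τ i0) = a i0 + G (τ i0) <;>
    by_cases p1 : M i1 (τ i1) = a i1 + G (τ i1) <;>
      by_cases p2 : M i2 (τ i2) = a i2 + G (τ i2)
  · exact core M τ a G hba h01 p0 p1
  · exact core M τ a G hba h01 p0 p1
  · exact core M τ a G hba h02 p0 p2
  · exact core M τ b H hbb h12 ((hbr i1).resolve_left p1) ((hbr i2).resolve_left p2)
  · exact core M τ a G hba h12 p1 p2
  · exact core M τ b H hbb h02 ((hbr i0).resolve_left p0) ((hbr i2).resolve_left p2)
  · exact core M τ b H hbb h01 ((hbr i0).resolve_left p0) ((hbr i1).resolve_left p1)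
  · exact core M τ b H hbb h01 ((hbr i0).resolve_left p0) ((hbr i1).resolve_left p1)

lemma sign_ne_neg (σ : Equiv.Perm (Fin k)) : Equiv.Perm.sign σ ≠ - Equiv.Perm.sign σ := by
  rcases Int.units_eq_one_or (Equiv.Perm.sign σ) with h | h <;> rw [h] <;> decide

lemma notrop (hk : 3 ≤ k) (a b G H : Fin k → WithBot ℝ)
    (M : Matrix (Fin k) (Fin k) (WithBot ℝ))
    (hM : ∀ i j, M i j = (a i + G j) ⊔ (b i + H j)) : ¬ TropNonsing M := by
  rintro ⟨σ, hne, hlt⟩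
  obtain ⟨τ', hsign, hle⟩ := opp hk a b G H M hM σ hne
  have hτσ : τ' ≠ σ := fun he => sign_ne_neg σ (he ▸ hsign)
  exact absurd (hlt τ' hτσ) (not_lt.2 hle)

lemma deteq (hk : 3 ≤ k) (a b G H : Fin k → WithBot ℝ)
    (M : Matrix (Fin k) (Fin k) (WithBot ℝ))
    (hM : ∀ i j, M i j = (a i + G j) ⊔ (b i + H j)) : detp M = detm M := by
  apply le_antisymm
  · apply Finset.sup_le
    intro σ hσ
    rcases eq_or_ne (∑ i, M i (σ i)) ⊥ with hb | hb
    · exact hb ▸ bot_le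
    obtain ⟨τ', hsign, hle⟩ := opp hk a b G H M hM σ hb
    refine hle.trans (Finset.le_sup (f := fun ρ : Equiv.Perm (Fin k) => ∑ i, M i (ρ i)) ?_)
    rw [Finset.mem_filter] at hσ ⊢
    rw [hsign, hσ.2]
    exact ⟨Finset.mem_univ _, rfl⟩
  · apply Finset.sup_le
    intro σ hσ
    rcases eq_or_ne (∑ i, M i (σ i)) ⊥ with hb | hb
    · exact hb ▸ bot_le
    obtain ⟨τ', hsign, hle⟩ := opp hk a b G H M hM σ hb
    refine hle.trans (Finset.le_sup (f := fun ρ : Equiv.Perm (Fin k) => ∑ i, M i (ρ i)) ?_)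
    rw [Finset.mem_filter] at hσ ⊢
    rw [hsign, hσ.2]
    exact ⟨Finset.mem_univ _, by decide⟩

end opp

/-- u as a pair is a tropical combination of pairs s and t -/
def Comb (s t u : WithBot ℝ × WithBot ℝ) : Prop :=
  ∃ c d : WithBot ℝ, u.1 = (c + s.1) ⊔ (d + t.1) ∧ u.2 = (c + s.2) ⊔ (d + t.2)

def slp : WithBot ℝ × WithBot ℝ → EReal
  | (Option.none, _) => ⊤
  | (Option.some _, Option.none) => ⊥
  | (Option.some x, Option.some y) => ((y - x : ℝ) : EReal)

lemma slp_bot_fst (b : WithBot ℝ) : slp (⊥, b) = ⊤ := rfl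
lemma slp_coe_bot (a : ℝ) : slp ((a : WithBot ℝ), ⊥) = ⊥ := rfl
lemma slp_coe_coe (a b : ℝ) : slp ((a : WithBot ℝ), (b : WithBot ℝ)) = ((b - a : ℝ) : EReal) := rfl

lemma comb_comm {s t u : WithBot ℝ × WithBot ℝ} (h : Comb s t u) : Comb t s u := by
  obtain ⟨c, d, h1, h2⟩ := h
  exact ⟨d, c, by rw [h1, sup_comm], by rw [h2, sup_comm]⟩

lemma wbcases (x : WithBot ℝ) : x = ⊥ ∨ ∃ r : ℝ, x = (r : WithBot ℝ) := by
  rcases eq_or_ne x ⊥ with h | h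
  · exact Or.inl h
  · obtain ⟨r, hr⟩ := WithBot.ne_bot_iff_exists.1 h
    exact Or.inr ⟨r, hr.symm⟩

/-- the middle-slope pair is a combination of the outer two -/
lemma mid {p q r : WithBot ℝ × WithBot ℝ} (hp : p ≠ (⊥, ⊥)) (hq : q ≠ (⊥, ⊥))
    (hr : r ≠ (⊥, ⊥)) (h1 : slp p ≤ slp q) (h2 : slp q ≤ slp r) :
    Comb p r q := by
  obtain ⟨a1, b1⟩ := p
  obtain ⟨a2, b2⟩ := q
  obtain ⟨a3, b3⟩ := r
  rcases wbcases a2 with rfl | ⟨a2, rfl⟩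
  · rcases wbcases b2 with rfl | ⟨b2, rfl⟩
    · exact absurd rfl hq
    rcases wbcases a3 with rfl | ⟨a3, rfl⟩
    · rcases wbcases b3 with rfl | ⟨b3, rfl⟩
      · exact absurd rfl hr
      · refine ⟨⊥, ((b2 - b3 : ℝ) : WithBot ℝ), by simp, ?_⟩
        show ((b2 : ℝ) : WithBot ℝ) = (⊥ + b1) ⊔ (((b2 - b3 : ℝ) : WithBot ℝ) + ((b3 : ℝ) : WithBot ℝ))
        rw [WithBot.bot_add, bot_sup_eq, ← WithBot.coe_add]
        exact_mod_cast (by ring : b2 = b2 - b3 + b3)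
    · exfalso
      rw [slp_bot_fst, top_le_iff] at h2
      rcases wbcases b3 with rfl | ⟨b3, rfl⟩
      · rw [slp_coe_bot] at h2
        exact absurd h2 (by simp)
      · rw [slp_coe_coe] at h2
        exact absurd h2 (EReal.coe_ne_top _)
  rcases wbcases b2 with rfl | ⟨b2, rfl⟩
  · rcases wbcases b1 with rfl | ⟨b1, rfl⟩
    · rcases wbcases a1 with rfl | ⟨a1, rfl⟩
      · exact absurd rfl hp
      · refine ⟨((a2 - a1 : ℝ) : WithBot ℝ), ⊥, ?_, by simp⟩
        show ((a2 : ℝ) : WithBot ℝ) = (((a2 - a1 : ℝ) : WithBot ℝ) + ((a1 : ℝ) : WithBot ℝ)) ⊔ (⊥ + a3)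
        rw [WithBot.bot_add, sup_bot_eq, ← WithBot.coe_add]
        exact_mod_cast (by ring : a2 = a2 - a1 + a1)
    · exfalso
      rw [slp_coe_bot, le_bot_iff] at h1
      rcases wbcases a1 with rfl | ⟨a1, rfl⟩
      · rw [slp_bot_fst] at h1
        exact absurd h1 (by simp)
      · rw [slp_coe_coe] at h1
        exact absurd h1 (EReal.coe_ne_bot _)
  -- q = (a2, b2) both real
  have ha1 : a1 ≠ ⊥ := by
    rintro rfl
    rcases wbcases b1 with rfl | ⟨b1, rfl⟩
    · exact hp rfl
    · rw [slp_bot_fst, slp_coe_coe, top_le_iff] at h1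
      exact absurd h1 (EReal.coe_ne_top _)
  have hb3 : b3 ≠ ⊥ := by
    rintro rfl
    rcases wbcases a3 with rfl | ⟨a3, rfl⟩
    · exact hr rfl
    · rw [slp_coe_bot, slp_coe_coe, le_bot_iff] at h2
      exact absurd h2 (EReal.coe_ne_bot _)
  obtain ⟨a1, rfl⟩ := WithBot.ne_bot_iff_exists.1 ha1
  obtain ⟨b3, rfl⟩ := WithBot.ne_bot_iff_exists.1 hb3
  refine ⟨((a2 - a1 : ℝ) : WithBot ℝ), ((b2 - b3 : ℝ) : WithBot ℝ), ?_, ?_⟩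
  · have h1' : ((b2 - b3 : ℝ) : WithBot ℝ) + a3 ≤ ((a2 : ℝ) : WithBot ℝ) := by
      rcases wbcases a3 with rfl | ⟨a3, rfl⟩
      · simp
      · rw [slp_coe_coe, slp_coe_coe, EReal.coe_le_coe_iff] at h2
        rw [← WithBot.coe_add, WithBot.coe_le_coe]
        linarith
    show (a2 : WithBot ℝ) = (((a2 - a1 : ℝ) : WithBot ℝ) + ((a1 : ℝ) : WithBot ℝ)) ⊔ (((b2 - b3 : ℝ) : WithBot ℝ) + a3)
    rw [← WithBot.coe_add]
    rw [show (a2 - a1 + a1 : ℝ) = a2 from by ring]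
    exact (sup_eq_left.2 h1').symm
  · have h2' : ((a2 - a1 : ℝ) : WithBot ℝ) + b1 ≤ ((b2 : ℝ) : WithBot ℝ) := by
      rcases wbcases b1 with rfl | ⟨b1, rfl⟩
      · simp
      · rw [slp_coe_coe, slp_coe_coe, EReal.coe_le_coe_iff] at h1
        rw [← WithBot.coe_add, WithBot.coe_le_coe]
        linarith
    show (b2 : WithBot ℝ) = (((a2 - a1 : ℝ) : WithBot ℝ) + b1) ⊔ (((b2 - b3 : ℝ) : WithBot ℝ) + ((b3 : ℝ) : WithBot ℝ))
    rw [← WithBot.coe_add]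
    rw [show (b2 - b3 + b3 : ℝ) = b2 from by ring]
    exact (sup_eq_right.2 h2').symm

lemma tri (p q r : WithBot ℝ × WithBot ℝ) :
    Comb q r p ∨ Comb p r q ∨ Comb p q r := by
  by_cases hp : p = (⊥, ⊥)
  · exact Or.inl ⟨⊥, ⊥, by simp [hp], by simp [hp]⟩
  by_cases hq : q = (⊥, ⊥)
  · exact Or.inr (Or.inl ⟨⊥, ⊥, by simp [hq], by simp [hq]⟩)
  by_cases hr : r = (⊥, ⊥)
  · exact Or.inr (Or.inr ⟨⊥, ⊥, by simp [hr], by simp [hr]⟩)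
  rcases le_total (slp p) (slp q) with h1 | h1 <;>
    rcases le_total (slp q) (slp r) with h2 | h2 <;>
      rcases le_total (slp p) (slp r) with h3 | h3
  · exact Or.inr (Or.inl (mid hp hq hr h1 h2))
  · exact Or.inr (Or.inl (mid hp hq hr h1 h2))
  · exact Or.inr (Or.inr (mid hp hr hq h3 h2))
  · exact Or.inl (comb_comm (mid hr hp hq h3 h1))
  · exact Or.inl (mid hq hp hr h1 h3)
  · exact Or.inr (Or.inr (comb_comm (mid hq hr hp h2 h3)))
  · exact Or.inr (Or.inl (comb_comm (mid hr hq hp h2 h1)))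
  · exact Or.inr (Or.inl (comb_comm (mid hr hq hp h2 h1)))

/-- dependence of a subfamily extends to the whole family -/
lemma gmdep_extend {k m n : ℕ} (w : Fin m → Fin n → WithBot ℝ) (e : Fin k → Fin m)
    (he : Function.Injective e) (hd : GMdep (fun t => w (e t))) : GMdep w := by
  classical
  obtain ⟨I, α, ⟨j0, hj0⟩, hbal⟩ := hd
  refine ⟨I.image e, fun j => if h : ∃ t, e t = j then α h.choose else ⊥, ⟨e j0, ?_⟩, ?_⟩
  · show (if h : ∃ t, e t = e j0 then α h.choose else ⊥) ≠ ⊥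
    have h : ∃ t, e t = e j0 := ⟨j0, rfl⟩
    rw [dif_pos h]
    have : h.choose = j0 := he h.choose_spec
    rwa [this]
  · intro l
    have key : ∀ t : Fin k, (if h : ∃ t', e t' = e t then α h.choose else ⊥) = α t := by
      intro t
      have h : ∃ t', e t' = e t := ⟨t, rfl⟩
      rw [dif_pos h]
      have : h.choose = t := he h.choose_spec
      rw [this]
    have h1 : ((I.image e).sup fun j => (if h : ∃ t, e t = j then α h.choose else ⊥) + w j l)
        = I.sup fun t => α t + w (e t) l := by
      rw [Finset.sup_image]
      exact Finset.sup_congr rfl fun t _ => by rw [Function.comp_apply, key t]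
    have h2 : ((I.image e)ᶜ.sup fun j => (if h : ∃ t, e t = j then α h.choose else ⊥) + w j l)
        = Iᶜ.sup fun t => α t + w (e t) l := by
      apply le_antisymm
      · apply Finset.sup_le
        intro j hj
        by_cases h : ∃ t, e t = j
        · obtain ⟨t, rfl⟩ := h
          have ht : t ∈ Iᶜ := by
            rw [Finset.mem_compl]
            intro hmem
            exact (Finset.mem_compl.1 hj) (Finset.mem_image_of_mem e hmem)
          rw [key t]
          exact Finset.le_sup (f := fun t => α t + w (e t) l) ht
        · rw [dif_neg h, WithBot.bot_add]
          exact bot_le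
      · apply Finset.sup_le
        intro t ht
        have : e t ∈ (I.image e)ᶜ := by
          rw [Finset.mem_compl]
          intro hmem
          obtain ⟨t', ht', he'⟩ := Finset.mem_image.1 hmem
          exact (Finset.mem_compl.1 ht) (he he' ▸ ht')
        have h3 := Finset.le_sup (f := fun j => (if h : ∃ t', e t' = j then α h.choose else ⊥) + w j l) this
        rw [key t] at h3
        exact h3
    rw [h1, h2]
    exact hbal l

lemma perm2cases : ∀ σ : Equiv.Perm (Fin 2), σ = 1 ∨ σ = Equiv.swap 0 1 := by decide

lemma sum2 (M : Matrix (Fin 2) (Fin 2) (WithBot ℝ)) (σ : Equiv.Perm (Fin 2)) :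
    ∑ i, M i (σ i) = M 0 (σ 0) + M 1 (σ 1) := by
  rw [Fin.sum_univ_two]

lemma sum2_one (M : Matrix (Fin 2) (Fin 2) (WithBot ℝ)) :
    ∑ i, M i ((1 : Equiv.Perm (Fin 2)) i) = M 0 0 + M 1 1 := by
  rw [sum2]; rfl

lemma sum2_swap (M : Matrix (Fin 2) (Fin 2) (WithBot ℝ)) :
    ∑ i, M i (Equiv.swap (0 : Fin 2) 1 i) = M 0 1 + M 1 0 := by
  rw [sum2, Equiv.swap_apply_left, Equiv.swap_apply_right]

lemma filter_even_2 : (Finset.univ.filter fun σ : Equiv.Perm (Fin 2) => Equiv.Perm.sign σ = 1)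
    = {1} := by
  apply Finset.ext
  intro σ
  simp only [Finset.mem_filter, Finset.mem_univ, true_and, Finset.mem_singleton]
  constructor
  · intro hs
    rcases perm2cases σ with rfl | rfl
    · rfl
    · rw [Equiv.Perm.sign_swap (by decide)] at hs
      exact absurd hs (by decide)
  · rintro rfl
    exact Equiv.Perm.sign_one
lemma filter_odd_2 : (Finset.univ.filter fun σ : Equiv.Perm (Fin 2) => Equiv.Perm.sign σ = -1)
    = {Equiv.swap 0 1} := by
  apply Finset.ext
  intro σ
  simp only [Finset.mem_filter, Finset.mem_univ, true_and, Finset.mem_singleton]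
  constructor
  · intro hs
    rcases perm2cases σ with rfl | rfl
    · rw [Equiv.Perm.sign_one] at hs
      exact absurd hs (by decide)
    · rfl
  · rintro rfl
    exact Equiv.Perm.sign_swap (by decide)

lemma detp2 (M : Matrix (Fin 2) (Fin 2) (WithBot ℝ)) : detp M = M 0 0 + M 1 1 := by
  rw [detp, filter_even_2, Finset.sup_singleton, sum2_one]

lemma detm2 (M : Matrix (Fin 2) (Fin 2) (WithBot ℝ)) : detm M = M 0 1 + M 1 0 := by
  rw [detm, filter_odd_2, Finset.sup_singleton, sum2_swap]

lemma trop2 (M : Matrix (Fin 2) (Fin 2) (WithBot ℝ))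
    (hne : M 0 0 + M 1 1 ≠ M 0 1 + M 1 0) : TropNonsing M := by
  rcases lt_or_gt_of_ne hne with hlt | hlt
  · refine ⟨Equiv.swap 0 1, ?_, ?_⟩
    · rw [sum2_swap]
      intro hb
      rw [hb] at hlt
      exact not_lt_bot hlt
    · intro τ hτ
      have : τ = 1 := (perm2cases τ).resolve_right hτ
      rw [this, sum2_one, sum2_swap]
      exact hlt
  · refine ⟨1, ?_, ?_⟩
    · rw [sum2_one]
      intro hb
      rw [hb] at hlt
      exact not_lt_bot hlt
    · intro τ hτ
      have : τ = Equiv.swap 0 1 := (perm2cases τ).resolve_left hτ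
      rw [this, sum2_one, sum2_swap]
      exact hlt

section s7
variable {n : ℕ}

/-- from an independent pair, a pair of columns with distinct cross products -/
lemma claim3 {u v : V n} (hnd : ¬ GMdep ![u, v]) (hu : ∃ l, u l ≠ ⊥) (hv : ∃ l, v l ≠ ⊥) :
    ∃ l l', u l + v l' ≠ u l' + v l := by
  by_contra hall
  push_neg at hall
  obtain ⟨l0, hl0⟩ := hu
  obtain ⟨l1, hl1⟩ := hv
  rcases eq_or_ne (v l0) ⊥ with hvb | hvb
  · have h := hall l0 l1
    rw [hvb, WithBot.add_bot] at h
    rcases WithBot.add_eq_bot.1 h with hc | hc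
    · exact hl0 hc
    · exact hl1 hc
  · obtain ⟨r, hr⟩ := WithBot.ne_bot_iff_exists.1 hvb
    obtain ⟨s, hs⟩ := WithBot.ne_bot_iff_exists.1 hl0
    apply hnd
    refine propdep (g := v) (c := ((s - r : ℝ) : WithBot ℝ)) (d := 0) (fun l => ?_) (fun l => by simp)
    have h := hall l l0
    rw [← hr, ← hs, add_comm (u l)] at h
    have h2 := eq_neg_add h
    have h3 : ((-r : ℝ) : WithBot ℝ) + ((s : ℝ) : WithBot ℝ) = ((s - r : ℝ) : WithBot ℝ) := by
      rw [← WithBot.coe_add]; congr 1; ring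
    rw [h2, ← add_assoc, h3]

/-- the two columns of the nonsingular 2x2 block are independent -/
lemma colpair {i0 j0 : Fin n} {l l' : Fin n} (A : Matrix (Fin n) (Fin n) (WithBot ℝ))
    (hne : A i0 l + A j0 l' ≠ A i0 l' + A j0 l) :
    ¬ GMdep ![fun m => A m l, fun m => A m l'] := by
  intro hd
  have hor : (A i0 l + A j0 l' ≠ ⊥) ∨ (A i0 l' + A j0 l ≠ ⊥) := by
    by_contra hc
    push_neg at hc
    exact hne (hc.1.trans hc.2.symm)
  have hx : ∃ m, A m l ≠ ⊥ := by
    rcases hor with h | h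
    · exact ⟨i0, fun hb => h (by rw [hb, WithBot.bot_add])⟩
    · exact ⟨j0, fun hb => h (by rw [hb, WithBot.add_bot])⟩
  have hy : ∃ m, A m l' ≠ ⊥ := by
    rcases hor with h | h
    · exact ⟨j0, fun hb => h (by rw [hb, WithBot.add_bot])⟩
    · exact ⟨i0, fun hb => h (by rw [hb, WithBot.bot_add])⟩
  obtain ⟨c, hc | hc⟩ := pairprop hd hx hy
  · apply hne
    rw [hc i0, hc j0]
    abel
  · apply hne
    rw [hc i0, hc j0]
    abel

/-- combination at the coefficient level gives span membership -/
lemma comb_sp2 {g h x y z : V n} {px py pz : WithBot ℝ × WithBot ℝ}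
    (hx : ∀ l, x l = (px.1 + g l) ⊔ (px.2 + h l))
    (hy : ∀ l, y l = (py.1 + g l) ⊔ (py.2 + h l))
    (hz : ∀ l, z l = (pz.1 + g l) ⊔ (pz.2 + h l))
    (hc : Comb py pz px) : sp2 y z x := by
  obtain ⟨c, d, h1, h2⟩ := hc
  refine ⟨c, d, fun l => ?_⟩
  rw [hx l, h1, h2, hy l, hz l,
    ← max_add_add_right, ← max_add_add_right, ← max_add_add_left, ← max_add_add_left,
    add_assoc, add_assoc, add_assoc, add_assoc]
  exact sup_sup_sup_comm _ _ _ _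

lemma sp2dep3 {g h x y z : V n} (hx : sp2 g h x) (hy : sp2 g h y) (hz : sp2 g h z) :
    GMdep ![x, y, z] := by
  obtain ⟨cx, dx, hx⟩ := hx
  obtain ⟨cy, dy, hy⟩ := hy
  obtain ⟨cz, dz, hz⟩ := hz
  rcases tri (cx, dx) (cy, dy) (cz, dz) with hc | hc | hc
  · exact memdep0 (comb_sp2 hx hy hz hc)
  · exact memdep1 (comb_sp2 hy hx hz hc)
  · exact memdep2 (comb_sp2 hz hx hy hc)

lemma onecoeff {m : ℕ} (w : Fin m → WithBot ℝ) (i : Fin m) :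
    (Finset.univ.sup fun t => (if t = i then (0 : WithBot ℝ) else ⊥) + w t) = w i := by
  apply le_antisymm
  · apply Finset.sup_le
    intro t _
    by_cases ht : t = i
    · subst ht; simp
    · simp [ht]
  · have := Finset.le_sup (f := fun t => (if t = i then (0 : WithBot ℝ) else ⊥) + w t)
      (Finset.mem_univ i)
    simpa using this

lemma twocoeff {m : ℕ} (w : Fin m → WithBot ℝ) {p q : Fin m} (hpq : p ≠ q)
    (c d : WithBot ℝ) :
    (Finset.univ.sup fun i => (if i = p then c else if i = q then d else ⊥) + w i)
      = (c + w p) ⊔ (d + w q) := by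
  apply le_antisymm
  · apply Finset.sup_le
    intro t _
    by_cases ht : t = p
    · subst ht; simp
    by_cases ht' : t = q
    · subst ht'; simp [ht]
    · simp [ht, ht']
  · apply sup_le
    · have := Finset.le_sup (f := fun i => (if i = p then c else if i = q then d else ⊥) + w i)
        (Finset.mem_univ p)
      simpa using this
    · have := Finset.le_sup (f := fun i => (if i = p then c else if i = q then d else ⊥) + w i)
        (Finset.mem_univ q)
      simpa [Ne.symm hpq] using this

end s7


lemma natSSup_eq_two {S : Set ℕ} (h2 : 2 ∈ S) (hb : ∀ k ∈ S, k ≤ 2) : sSup S = 2 :=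
  le_antisymm (csSup_le ⟨2, h2⟩ hb) (le_csSup ⟨2, fun k hk => hb k hk⟩ h2)

lemma natSInf_eq_two {S : Set ℕ} (h2 : 2 ∈ S) (hb : ∀ k ∈ S, 2 ≤ k) : sInf S = 2 :=
  le_antisymm (Nat.sInf_le h2) (le_csInf ⟨2, h2⟩ hb)

lemma rowmem {n : ℕ} (A : Matrix (Fin n) (Fin n) (WithBot ℝ)) (i : Fin n) :
    A i ∈ mpRowSpace A :=
  ⟨fun t => if t = i then 0 else ⊥, funext fun j => (onecoeff (fun t => A t j) i).symm⟩


end AuxRanks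

/-- If the maximal Gondran–Minoux row rank of an `n×n` max-plus matrix (`n ≥ 2`)
equals `2`, then the tropical rank, the determinantal rank, the maximal row and
column Gondran–Minoux ranks, the factor rank, and the row rank all equal `2`. -/
theorem ranks_eq_of_gmRowRank_eq_two {n : ℕ} (hn : 2 ≤ n)
    (A : Matrix (Fin n) (Fin n) (WithBot ℝ)) (h : gmRowRank A = 2) :
    tropRank A = 2 ∧ detRank A = 2 ∧ gmRowRank A = 2 ∧ gmRowRank A.transpose = 2 ∧
      facRank A = 2 ∧ rowRank A = 2 := by
  classical
  have h' : sSup {k | ∃ r : Fin k → Fin n, Function.Injective r ∧ ¬ GMdep (fun i => A (r i))} = 2 := h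
  set S := {k | ∃ r : Fin k → Fin n, Function.Injective r ∧ ¬ GMdep (fun i => A (r i))} with hSdef
  have hbddS : BddAbove S := ⟨n, fun k hk => by
    obtain ⟨r, hr, _⟩ := hk
    simpa using Fintype.card_le_of_injective r hr⟩
  have h0S : (0 : ℕ) ∈ S := ⟨Fin.elim0, fun a => a.elim0, fun hd => by
    obtain ⟨I, α, ⟨j, _⟩, _⟩ := hd
    exact j.elim0⟩
  have hS2 : (2 : ℕ) ∈ S := by
    have := Nat.sSup_mem ⟨0, h0S⟩ hbddS
    rwa [h'] at this
  have hSle : ∀ k ∈ S, k ≤ 2 := fun k hk => by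
    have := le_csSup hbddS hk
    rwa [h'] at this
  have hS3 : ∀ r : Fin 3 → Fin n, Function.Injective r → GMdep (fun i => A (r i)) := by
    intro r hr
    by_contra hnd
    have h3 : (3 : ℕ) ∈ S := ⟨r, hr, hnd⟩
    have := hSle 3 h3
    omega
  obtain ⟨r0, hr0inj, hnd0⟩ := hS2
  have hij : r0 0 ≠ r0 1 := fun he => absurd (hr0inj he) (by decide)
  have hnd' : ¬ GMdep ![A (r0 0), A (r0 1)] := by
    intro hd
    apply hnd0
    have he : (fun i => A (r0 i)) = ![A (r0 0), A (r0 1)] := by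
      funext t
      fin_cases t <;> simp
    rwa [he]
  have hi0 : ∃ l, A (r0 0) l ≠ ⊥ := by
    by_contra hb
    push_neg at hb
    exact hnd' (botdep1 hb)
  have hj0 : ∃ l, A (r0 1) l ≠ ⊥ := by
    by_contra hb
    push_neg at hb
    exact hnd' (botdep2 hb)
  obtain ⟨l, l', hne4⟩ := claim3 hnd' hi0 hj0
  have hll' : l ≠ l' := by
    rintro rfl
    exact hne4 rfl
  obtain ⟨p, q, hpq, hcov⟩ := main A hS3 hij hi0 hj0
  have hcov' : ∀ i, ∃ c d : WithBot ℝ, ∀ m, A i m = (c + A p m) ⊔ (d + A q m) := hcov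
  choose ca cb hac using hcov'
  have hcol : ∀ j, sp2 ca cb (fun m => A m j) := fun j =>
    ⟨A p j, A q j, fun m => by show A m j = _; rw [hac m j, add_comm (ca m), add_comm (cb m)]⟩
  refine ⟨?_, ?_, h, ?_, ?_, ?_⟩
  · -- tropRank
    apply natSSup_eq_two
    · refine ⟨![r0 0, r0 1], ![l, l'], inj2 hij, inj2 hll', ?_⟩
      apply trop2
      simp only [Matrix.cons_val_zero, Matrix.cons_val_one, Matrix.head_cons]
      exact hne4
    · intro k hk
      by_contra hk2
      push_neg at hk2
      obtain ⟨r, c, hr, hc, ht⟩ := hk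
      exact notrop (by omega) (fun x => ca (r x)) (fun x => cb (r x))
        (fun y => A p (c y)) (fun y => A q (c y)) _ (fun x y => hac (r x) (c y)) ht
  · -- detRank
    apply natSSup_eq_two
    · refine ⟨![r0 0, r0 1], ![l, l'], inj2 hij, inj2 hll', ?_⟩
      erw [detp2, detm2]
      simp only [Matrix.cons_val_zero, Matrix.cons_val_one, Matrix.head_cons]
      exact hne4
    · intro k hk
      by_contra hk2
      push_neg at hk2
      obtain ⟨r, c, hr, hc, ht⟩ := hk
      exact ht (deteq (by omega) (fun x => ca (r x)) (fun x => cb (r x))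
        (fun y => A p (c y)) (fun y => A q (c y)) _ (fun x y => hac (r x) (c y)))
  · -- gmRowRank of transpose
    apply natSSup_eq_two
    · refine ⟨![l, l'], inj2 hll', ?_⟩
      have he : (fun t => A.transpose (![l, l'] t)) = ![fun m => A m l, fun m => A m l'] := by
        funext t
        fin_cases t <;> (funext m; simp [Matrix.transpose_apply])
      rw [he]
      exact colpair A hne4
    · intro k hk
      by_contra hk2
      push_neg at hk2
      obtain ⟨r, hr, hnd⟩ := hk
      apply hnd
      have h3k : 3 ≤ k := by omega
      have hei : Function.Injective (Fin.castLE h3k) := Fin.castLE_injective h3k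
      apply gmdep_extend _ (Fin.castLE h3k) hei
      have he : (fun t => A.transpose (r (Fin.castLE h3k t)))
          = ![A.transpose (r (Fin.castLE h3k 0)), A.transpose (r (Fin.castLE h3k 1)),
              A.transpose (r (Fin.castLE h3k 2))] := by
        funext t
        fin_cases t <;> simp
      show GMdep fun t => A.transpose (r (Fin.castLE h3k t))
      rw [he]
      exact sp2dep3 (hcol _) (hcol _) (hcol _)
  · -- facRank
    apply natSInf_eq_two
    · refine ⟨fun i t => if t = 0 then ca i else cb i, fun t j => if t = 0 then A p j else A q j, ?_⟩
      funext i j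
      show A i j = Finset.univ.sup fun t : Fin 2 => _
      rw [fin2sup]
      simp only [if_pos rfl, if_neg (show (1 : Fin 2) ≠ 0 by decide)]
      exact hac i j
    · intro k hk
      match k, hk with
      | 0, ⟨B, C, hBC⟩ => 
        exfalso
        obtain ⟨lx, hlx⟩ := hi0
        apply hlx
        have hb := congrFun (congrFun hBC (r0 0)) lx
        rw [hb]
        show Finset.univ.sup _ = ⊥
        simp
      | 1, ⟨B, C, hBC⟩ =>
        exfalso
        apply hnd'
        refine propdep (g := fun m => C 0 m) (c := B (r0 0) 0) (d := B (r0 1) 0) (fun m => ?_) (fun m => ?_)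
        · have hb := congrFun (congrFun hBC (r0 0)) m
          rw [hb]
          exact fin1sup _
        · have hb := congrFun (congrFun hBC (r0 1)) m
          rw [hb]
          exact fin1sup _
      | (k+2), _ => omega
  · -- rowRank
    apply natSInf_eq_two
    · refine ⟨![A p, A q], ?_⟩
      apply Set.ext
      intro v
      constructor
      · rintro ⟨α, rfl⟩
        refine ⟨fun i => if i = p then α 0 else if i = q then α 1 else ⊥, ?_⟩
        funext j
        rw [twocoeff (fun i => A i j) hpq (α 0) (α 1), fin2sup]
        simp
      · rintro ⟨β, rfl⟩
        refine ⟨![Finset.univ.sup (fun i => β i + ca i), Finset.univ.sup (fun i => β i + cb i)], ?_⟩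
        funext j
        rw [fin2sup]
        simp only [Matrix.cons_val_zero, Matrix.cons_val_one, Matrix.head_cons]
        rw [supAddR, supAddR, ← Finset.sup_sup]
        apply Finset.sup_congr rfl
        intro i _
        show β i + A i j = (β i + ca i + A p j) ⊔ (β i + cb i + A q j)
        rw [hac i j, ← max_add_add_left, ← add_assoc, ← add_assoc]
    · intro k hk
      match k, hk with
      | 0, ⟨g, hg⟩ =>
        exfalso
        obtain ⟨lx, hlx⟩ := hi0
        apply hlx
        have hmem : A (r0 0) ∈ mpSpanFam g := by
          rw [hg]
          exact rowmem A (r0 0)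
        obtain ⟨α, hα⟩ := hmem
        have hb := congrFun hα lx
        rw [hb]
        show Finset.univ.sup _ = ⊥
        simp
      | 1, ⟨g, hg⟩ =>
        exfalso
        apply hnd'
        have hmem1 : A (r0 0) ∈ mpSpanFam g := by
          rw [hg]; exact rowmem A (r0 0)
        have hmem2 : A (r0 1) ∈ mpSpanFam g := by
          rw [hg]; exact rowmem A (r0 1)
        obtain ⟨α, hα⟩ := hmem1
        obtain ⟨γ, hγ⟩ := hmem2
        exact propdep (g := g 0) (c := α 0) (d := γ 0)
          (fun m => (congrFun hα m).trans (fin1sup _))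
          (fun m => (congrFun hγ m).trans (fin1sup _))
      | (k+2), _ => omega
end
end
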